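/- arXiv:2111.10631 — 7 statements merged into one kernel-verified Lean document; each statement's English description precedes it below -/
import Mathlib

section
/- In the free group F generated by a and b, with r = a^{2k+1} b^2, λ = (a^k b)^{2k+1} a^{2k+1} (a^k b)^{2k+1}, and μ = (a^k b)^{-1}, the following identity holds: μ λ μ^{-1} λ^{-1} = (μ^{-2k} a^k) r (μ^{-2k} a^k)^{-1} μ^{-2k-1} r^{-1} μ^{2k+1}. -/
open FreeGroup

theorem free_group_commutator_identity (k : ℕ) (hk : 0 < k) :
    let a : FreeGroup (Fin 2) := FreeGroup.of 0
    let b : FreeGroup (Fin 2) := FreeGroup.of 1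
    let r : FreeGroup (Fin 2) := a ^ (2 * k + 1) * b ^ 2
    let lam : FreeGroup (Fin 2) :=
      (a ^ k * b) ^ (2 * k + 1) * a ^ (2 * k + 1) * (a ^ k * b) ^ (2 * k + 1)
    let μ : FreeGroup (Fin 2) := (a ^ k * b)⁻¹
    μ * lam * μ⁻¹ * lam⁻¹ =
      (μ ^ (-(2 * (k : ℤ))) * a ^ k) * r * (μ ^ (-(2 * (k : ℤ))) * a ^ k)⁻¹ *
        μ ^ (-(2 * (k : ℤ)) - 1) * r⁻¹ * μ ^ (2 * (k : ℤ) + 1) := by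
  intro a b r lam μ
  simp only [r, lam, μ]
  set c := a ^ k * b with hc
  have key : a ^ k * b ^ 2 * (a ^ k)⁻¹ * c * (b ^ 2)⁻¹ = c := by
    rw [hc]; group
  calc c⁻¹ * (c ^ (2 * k + 1) * a ^ (2 * k + 1) * c ^ (2 * k + 1)) * c⁻¹⁻¹ *
        (c ^ (2 * k + 1) * a ^ (2 * k + 1) * c ^ (2 * k + 1))⁻¹
      = c ^ (2 * (k : ℤ)) * a ^ (2 * k + 1) * c * a ^ (-(2 * (k : ℤ)) - 1) *
          c ^ (-(2 * (k : ℤ)) - 1) := by group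
    _ = c ^ (2 * (k : ℤ)) * a ^ (2 * k + 1) *
          (a ^ k * b ^ 2 * (a ^ k)⁻¹ * c * (b ^ 2)⁻¹) * a ^ (-(2 * (k : ℤ)) - 1) *
          c ^ (-(2 * (k : ℤ)) - 1) := by rw [key]
    _ = (c⁻¹ ^ (-(2 * (k : ℤ))) * a ^ k) * (a ^ (2 * k + 1) * b ^ 2) *
          (c⁻¹ ^ (-(2 * (k : ℤ))) * a ^ k)⁻¹ * c⁻¹ ^ (-(2 * (k : ℤ)) - 1) *
          (a ^ (2 * k + 1) * b ^ 2)⁻¹ * c⁻¹ ^ (2 * (k : ℤ) + 1) := by group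
end

section
/- The group π with presentation ⟨x_1, ..., x_{2k+1} | r_1, ..., r_{2k}⟩, where r_i = x_i x_{i+1} x_{i+2}^{-1} x_{i+1}^{-1} with indices mod 2k+1, is isomorphic to the group G = ⟨a, b | a^{2k+1} b^2⟩, via an isomorphism φ satisfying φ(x_{2(k-s)+1}) = a^s (a^k b)^{-1} a^{-s} for 0 ≤ s ≤ k and φ(x_{2(k-s)}) = a^s (a^{k+1} b) a^{-s} for 0 ≤ s ≤ k-1. -/
/-- The generators `x_i` (indices mod `2k+1`) of the Wirtinger presentation, as elements of the
free group on `ZMod (2k+1)`. -/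
noncomputable def xF (k : ℕ) (i : ℕ) : FreeGroup (ZMod (2 * k + 1)) :=
  FreeGroup.of (i : ZMod (2 * k + 1))

/-- The Wirtinger relators `r_i = x_i x_{i+1} x_{i+2}⁻¹ x_{i+1}⁻¹` for `1 ≤ i ≤ 2k`. -/
def wirtingerRels (k : ℕ) : Set (FreeGroup (ZMod (2 * k + 1))) :=
  {w | ∃ i : ℕ, 1 ≤ i ∧ i ≤ 2 * k ∧
    w = xF k i * xF k (i + 1) * (xF k (i + 2))⁻¹ * (xF k (i + 1))⁻¹}

/-- The relator `a^{2k+1} b^2` of the two-generator presentation of the torus knot group. -/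
def torusRels (k : ℕ) : Set (FreeGroup (Fin 2)) :=
  {FreeGroup.of 0 ^ (2 * k + 1) * FreeGroup.of 1 ^ 2}

namespace TKP

instance inst1 (k : ℕ) : NeZero (2 * k + 1) := ⟨by omega⟩

noncomputable def aT (k : ℕ) : PresentedGroup (torusRels k) := PresentedGroup.of 0
noncomputable def bT (k : ℕ) : PresentedGroup (torusRels k) := PresentedGroup.of 1
noncomputable def uT (k : ℕ) : PresentedGroup (torusRels k) := aT k ^ k * bT k

/-- Image of the Wirtinger generator with (natural number) index `n ∈ [0, 2k]`. -/
noncomputable def F (k : ℕ) (n : ℕ) : PresentedGroup (torusRels k) :=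
  if n % 2 = 1 then aT k ^ ((2 * k + 1 - n) / 2) * (uT k)⁻¹ * (aT k ^ ((2 * k + 1 - n) / 2))⁻¹
  else if n = 0 then (uT k)⁻¹
  else aT k ^ (k - n / 2) * (aT k * uT k) * (aT k ^ (k - n / 2))⁻¹

noncomputable def f (k : ℕ) (j : ZMod (2 * k + 1)) : PresentedGroup (torusRels k) :=
  F k j.val

lemma F_odd (k t : ℕ) (ht : t ≤ k) :
    F k (2 * t + 1) = aT k ^ (k - t) * (uT k)⁻¹ * (aT k ^ (k - t))⁻¹ := by
  rw [F, if_pos (by omega), show (2 * k + 1 - (2 * t + 1)) / 2 = k - t by omega]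

lemma F_even (k t : ℕ) (ht : 1 ≤ t) :
    F k (2 * t) = aT k ^ (k - t) * (aT k * uT k) * (aT k ^ (k - t))⁻¹ := by
  rw [F, if_neg (by omega), if_neg (by omega), show 2 * t / 2 = t by omega]

lemma F_zero (k : ℕ) : F k 0 = (uT k)⁻¹ := by
  rw [F, if_neg (by omega), if_pos rfl]

lemma torus_rel (k : ℕ) : aT k ^ (2 * k + 1) * bT k ^ 2 = 1 := by
  have h : (PresentedGroup.mk (torusRels k))
      (FreeGroup.of 0 ^ (2 * k + 1) * FreeGroup.of 1 ^ 2) = 1 := by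
    apply (QuotientGroup.eq_one_iff _).mpr
    exact Subgroup.subset_normalClosure rfl
  simpa [map_mul, map_pow, aT, bT, PresentedGroup.of] using h

lemma b_sq (k : ℕ) : (bT k ^ 2)⁻¹ = aT k ^ (2 * k + 1) := by
  have h := torus_rel k
  rw [eq_inv_of_mul_eq_one_left h]

lemma lemC (k : ℕ) :
    (uT k)⁻¹ * (aT k ^ k * (uT k)⁻¹ * (aT k ^ k)⁻¹) = aT k :=
  calc (uT k)⁻¹ * (aT k ^ k * (uT k)⁻¹ * (aT k ^ k)⁻¹)
      = (bT k ^ 2)⁻¹ * (aT k ^ (2 * k))⁻¹ := by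
        rw [uT, show 2 * k = k + k by omega, pow_add]; group
    _ = aT k ^ (2 * k + 1) * (aT k ^ (2 * k))⁻¹ := by rw [b_sq]
    _ = aT k := by rw [pow_succ]; group

lemma keyL (k : ℕ) (hk : 0 < k) (j : ZMod (2 * k + 1)) :
    f k j * f k (j + 1) = aT k := by
  have hm : j.val < 2 * k + 1 := ZMod.val_lt j
  have hj : ((j.val : ℕ) : ZMod (2 * k + 1)) = j := ZMod.natCast_rightInverse j
  have hj1 : (j + 1).val = (j.val + 1) % (2 * k + 1) := by
    conv_lhs => rw [← hj, ← Nat.cast_add_one]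
    rw [ZMod.val_natCast]
  rw [show f k j = F k j.val from rfl, show f k (j + 1) = F k ((j.val + 1) % (2 * k + 1)) by
    rw [f, hj1]]
  set m := j.val with hmdef
  clear_value m
  clear hj hj1 hmdef
  rcases Nat.lt_or_ge m (2 * k) with h | h
  · rw [Nat.mod_eq_of_lt (by omega)]
    rcases Nat.even_or_odd m with ⟨t, rfl⟩ | ⟨t, rfl⟩
    · rcases Nat.eq_zero_or_pos t with rfl | ht
      · -- m = 0
        rw [show (0 : ℕ) + 0 = 0 by omega, F_zero,
          show (0 : ℕ) + 0 + 1 = 2 * 0 + 1 by omega, F_odd k 0 (by omega), Nat.sub_zero]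
        exact lemC k
      · -- m = 2t, t ≥ 1
        rw [show t + t = 2 * t by omega, F_even k t ht, show 2 * t + 1 = 2 * t + 1 from rfl,
          F_odd k t (by omega)]
        group
    · -- m = 2t + 1
      rw [show 2 * t + 1 + 1 = 2 * (t + 1) by omega, F_odd k t (by omega),
        F_even k (t + 1) (by omega),
        show k - t = (k - (t + 1)) + 1 by omega, pow_succ]
      group
  · -- m = 2k
    have hm2 : m = 2 * k := by omega
    subst hm2
    rw [Nat.mod_self, show (2 : ℕ) * k = 2 * k from rfl, F_even k k (by omega), Nat.sub_self,
      pow_zero, F_zero]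
    group

lemma hf (k : ℕ) (hk : 0 < k) :
    ∀ r ∈ wirtingerRels k, FreeGroup.lift (f k) r = 1 := by
  rintro r ⟨i, h1, h2, rfl⟩
  simp only [map_mul, map_inv, xF, FreeGroup.lift_apply_of]
  have e1 : ((i + 1 : ℕ) : ZMod (2 * k + 1)) = (i : ZMod (2 * k + 1)) + 1 := by push_cast; ring
  have e2 : ((i + 2 : ℕ) : ZMod (2 * k + 1)) = ((i : ZMod (2 * k + 1)) + 1) + 1 := by
    push_cast; ring
  rw [e1, e2]
  have k1 := keyL k hk (i : ZMod (2 * k + 1))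
  have k2 := keyL k hk ((i : ZMod (2 * k + 1)) + 1)
  rw [k1]
  calc aT k * (f k ((i : ZMod (2 * k + 1)) + 1 + 1))⁻¹ * (f k ((i : ZMod (2 * k + 1)) + 1))⁻¹
      = aT k * (f k ((i : ZMod (2 * k + 1)) + 1) * f k ((i : ZMod (2 * k + 1)) + 1 + 1))⁻¹ := by
        group
    _ = 1 := by rw [k2]; group

/- ### the Wirtinger side -/

noncomputable def Xz (k : ℕ) (j : ZMod (2 * k + 1)) : PresentedGroup (wirtingerRels k) :=
  PresentedGroup.of j

noncomputable def c (k : ℕ) : PresentedGroup (wirtingerRels k) := Xz k 1 * Xz k 2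

lemma wrel (k : ℕ) (i : ℕ) (h1 : 1 ≤ i) (h2 : i ≤ 2 * k) :
    Xz k (i : ZMod (2 * k + 1)) * Xz k ((i + 1 : ℕ) : ZMod (2 * k + 1)) =
    Xz k ((i + 1 : ℕ) : ZMod (2 * k + 1)) * Xz k ((i + 2 : ℕ) : ZMod (2 * k + 1)) := by
  have h : (PresentedGroup.mk (wirtingerRels k))
      (xF k i * xF k (i + 1) * (xF k (i + 2))⁻¹ * (xF k (i + 1))⁻¹) = 1 := by
    apply (QuotientGroup.eq_one_iff _).mpr
    exact Subgroup.subset_normalClosure ⟨i, h1, h2, rfl⟩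
  simp only [map_mul, map_inv] at h
  have h2 : (Xz k (i : ZMod (2 * k + 1)) * Xz k ((i + 1 : ℕ) : ZMod (2 * k + 1))) *
      (Xz k ((i + 1 : ℕ) : ZMod (2 * k + 1)) * Xz k ((i + 2 : ℕ) : ZMod (2 * k + 1)))⁻¹ = 1 := by
    rw [mul_inv_rev, ← mul_assoc]
    exact h
  exact mul_inv_eq_one.mp h2

lemma chainP1 (k : ℕ) : ∀ i : ℕ, 1 ≤ i → i ≤ 2 * k + 1 →
    Xz k (i : ZMod (2 * k + 1)) * Xz k ((i + 1 : ℕ) : ZMod (2 * k + 1)) = c k := by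
  intro i hi
  induction i, hi using Nat.le_induction with
  | base =>
    intro _
    rw [c]
    norm_num
  | succ i hi IH =>
    intro h
    rw [← wrel k i hi (by omega)]
    exact IH (by omega)

lemma chainP2 (k : ℕ) (hk : 0 < k) (j : ZMod (2 * k + 1)) : Xz k j * Xz k (j + 1) = c k := by
  rcases Nat.eq_zero_or_pos j.val with h0 | hpos
  · have hj : j = 0 := (ZMod.val_eq_zero j).mp h0
    subst hj
    have h := chainP1 k (2 * k + 1) (by omega) (by omega)
    rw [ZMod.natCast_self] at h
    rw [show ((2 * k + 1 + 1 : ℕ) : ZMod (2 * k + 1)) = 0 + 1 by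
      have h0 : ((2 * k + 1 : ℕ) : ZMod (2 * k + 1)) = 0 := ZMod.natCast_self _
      push_cast at h0 ⊢
      linear_combination h0] at h
    exact h
  · have hm : j.val < 2 * k + 1 := ZMod.val_lt j
    have hj : ((j.val : ℕ) : ZMod (2 * k + 1)) = j := ZMod.natCast_rightInverse j
    have h := chainP1 k j.val hpos (by omega)
    rw [hj, show ((j.val + 1 : ℕ) : ZMod (2 * k + 1)) = j + 1 by push_cast [hj]; ring] at h
    exact h

lemma conjP3 (k : ℕ) (hk : 0 < k) (j : ZMod (2 * k + 1)) :
    c k * Xz k j = Xz k (j - 2) * c k := by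
  have h1 := chainP2 k hk (j - 2)
  have h2 := chainP2 k hk (j - 1)
  rw [show j - 2 + 1 = j - 1 by ring] at h1
  rw [show j - 1 + 1 = j by ring] at h2
  calc c k * Xz k j = (Xz k (j - 2) * Xz k (j - 1)) * Xz k j := by rw [h1]
    _ = Xz k (j - 2) * (Xz k (j - 1) * Xz k j) := by group
    _ = Xz k (j - 2) * c k := by rw [h2]

lemma conjP4 (k : ℕ) (hk : 0 < k) (t : ℕ) : ∀ j : ZMod (2 * k + 1),
    c k ^ t * Xz k j = Xz k (j - 2 * t) * c k ^ t := by
  induction t with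
  | zero => intro j; simp
  | succ t IH =>
    intro j
    calc c k ^ (t + 1) * Xz k j = c k ^ t * (c k * Xz k j) := by rw [pow_succ]; group
      _ = c k ^ t * (Xz k (j - 2) * c k) := by rw [conjP3 k hk]
      _ = (c k ^ t * Xz k (j - 2)) * c k := by group
      _ = (Xz k (j - 2 - 2 * t) * c k ^ t) * c k := by rw [IH (j - 2)]
      _ = Xz k (j - 2 * ((t : ℕ) + 1 : ℕ)) * c k ^ (t + 1) := by
          rw [show j - 2 - 2 * ((t : ℕ) : ZMod (2 * k + 1)) =
            j - 2 * (((t : ℕ) + 1 : ℕ) : ZMod (2 * k + 1)) by push_cast; ring, pow_succ]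
          group

lemma castZero (k : ℕ) : (0 : ZMod (2 * k + 1)) - 2 * (k : ZMod (2 * k + 1)) = 1 := by
  have h0 : ((2 * k + 1 : ℕ) : ZMod (2 * k + 1)) = 0 := ZMod.natCast_self _
  push_cast at h0
  linear_combination -h0

lemma P5 (k : ℕ) (hk : 0 < k) :
    Xz k 0 * c k ^ k * Xz k 0 = c k ^ (k + 1) := by
  have h := conjP4 k hk k 0
  rw [castZero k] at h
  have h2 := chainP2 k hk 0
  rw [zero_add] at h2
  calc Xz k 0 * c k ^ k * Xz k 0 = Xz k 0 * (c k ^ k * Xz k 0) := by group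
    _ = Xz k 0 * (Xz k 1 * c k ^ k) := by rw [h]
    _ = (Xz k 0 * Xz k 1) * c k ^ k := by group
    _ = c k * c k ^ k := by rw [h2]
    _ = c k ^ (k + 1) := by rw [pow_succ]; group

noncomputable def g (k : ℕ) : Fin 2 → PresentedGroup (wirtingerRels k) :=
  ![c k, (c k ^ k)⁻¹ * (Xz k 0)⁻¹]

lemma hg (k : ℕ) (hk : 0 < k) :
    ∀ r ∈ torusRels k, FreeGroup.lift (g k) r = 1 := by
  rintro r hr
  rw [show r = FreeGroup.of 0 ^ (2 * k + 1) * FreeGroup.of 1 ^ 2 from hr]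
  simp only [map_mul, map_pow, FreeGroup.lift_apply_of]
  rw [show g k 0 = c k from rfl, show g k 1 = (c k ^ k)⁻¹ * (Xz k 0)⁻¹ from rfl]
  have h5 := P5 k hk
  calc c k ^ (2 * k + 1) * ((c k ^ k)⁻¹ * (Xz k 0)⁻¹) ^ 2
      = c k ^ (2 * k + 1) * (c k ^ k)⁻¹ * (Xz k 0 * c k ^ k * Xz k 0)⁻¹ := by
        rw [sq]; group
    _ = c k ^ (2 * k + 1) * (c k ^ k)⁻¹ * (c k ^ (k + 1))⁻¹ := by rw [h5]
    _ = 1 := by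
        rw [show c k ^ (2 * k + 1) = c k ^ k * c k ^ (k + 1) by
          rw [← pow_add]; congr 1; omega]
        group

noncomputable def phih (k : ℕ) (hk : 0 < k) :
    PresentedGroup (wirtingerRels k) →* PresentedGroup (torusRels k) :=
  PresentedGroup.toGroup (hf k hk)

noncomputable def psih (k : ℕ) (hk : 0 < k) :
    PresentedGroup (torusRels k) →* PresentedGroup (wirtingerRels k) :=
  PresentedGroup.toGroup (hg k hk)

lemma phih_of (k : ℕ) (hk : 0 < k) (j : ZMod (2 * k + 1)) :
    phih k hk (PresentedGroup.of j) = f k j :=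
  PresentedGroup.toGroup.of _

lemma psih_a (k : ℕ) (hk : 0 < k) : psih k hk (aT k) = c k := by
  rw [aT, psih, PresentedGroup.toGroup.of]
  rfl

lemma psih_b (k : ℕ) (hk : 0 < k) : psih k hk (bT k) = (c k ^ k)⁻¹ * (Xz k 0)⁻¹ := by
  rw [bT, psih, PresentedGroup.toGroup.of]
  rfl

lemma psih_u (k : ℕ) (hk : 0 < k) : psih k hk (uT k) = (Xz k 0)⁻¹ := by
  rw [uT, map_mul, map_pow, psih_a, psih_b]
  group

lemma hcast0 (k : ℕ) : ((2 * k + 1 : ℕ) : ZMod (2 * k + 1)) = 0 := ZMod.natCast_self _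

lemma psih_F (k : ℕ) (hk : 0 < k) (m : ℕ) (hm : m < 2 * k + 1) :
    psih k hk (F k m) = Xz k (m : ZMod (2 * k + 1)) := by
  have h0 := hcast0 k
  push_cast at h0
  have hx : (Xz k 0)⁻¹ = Xz k 1 * (c k)⁻¹ := by
    have h2 := chainP2 k hk 0
    rw [zero_add] at h2
    rw [← h2]
    group
  rcases Nat.even_or_odd m with ⟨t, rfl⟩ | ⟨t, rfl⟩
  · rcases Nat.eq_zero_or_pos t with rfl | ht
    · rw [show (0 : ℕ) + 0 = 0 by omega, F_zero, map_inv, psih_u, inv_inv, Nat.cast_zero]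
    · have htk : t ≤ k := by omega
      rw [show t + t = 2 * t by omega, F_even k t ht, map_mul, map_mul, map_mul, map_pow,
        map_inv, map_pow, psih_a, psih_u, hx]
      calc c k ^ (k - t) * (c k * (Xz k 1 * (c k)⁻¹)) * (c k ^ (k - t))⁻¹
          = (c k ^ (k - t + 1) * Xz k 1) * ((c k)⁻¹ * (c k ^ (k - t))⁻¹) := by
            rw [pow_succ]; group
        _ = (Xz k (1 - 2 * ((k - t + 1 : ℕ) : ZMod (2 * k + 1))) * c k ^ (k - t + 1)) *
              ((c k)⁻¹ * (c k ^ (k - t))⁻¹) := by rw [conjP4 k hk (k - t + 1) 1]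
        _ = Xz k (1 - 2 * ((k - t + 1 : ℕ) : ZMod (2 * k + 1))) := by rw [pow_succ]; group
        _ = Xz k ((2 * t : ℕ) : ZMod (2 * k + 1)) := by
            congr 1
            push_cast [Nat.cast_sub htk]
            linear_combination -h0
  · have htk : t < k := by omega
    rw [F_odd k t (by omega), map_mul, map_mul, map_pow, map_inv, map_inv, map_pow,
      psih_a, psih_u, inv_inv]
    calc c k ^ (k - t) * Xz k 0 * (c k ^ (k - t))⁻¹
        = (Xz k (0 - 2 * ((k - t : ℕ) : ZMod (2 * k + 1))) * c k ^ (k - t)) *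
            (c k ^ (k - t))⁻¹ := by rw [conjP4 k hk (k - t) 0]
      _ = Xz k (0 - 2 * ((k - t : ℕ) : ZMod (2 * k + 1))) := by group
      _ = Xz k ((2 * t + 1 : ℕ) : ZMod (2 * k + 1)) := by
          congr 1
          push_cast [Nat.cast_sub htk.le]
          linear_combination -h0

lemma phih_c (k : ℕ) (hk : 0 < k) : phih k hk (c k) = aT k := by
  rw [c, map_mul, Xz, Xz, phih_of, phih_of]
  have h := keyL k hk 1
  rw [show (1 : ZMod (2 * k + 1)) + 1 = 2 by norm_num] at h
  exact h

lemma comp1 (k : ℕ) (hk : 0 < k) :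
    (psih k hk).comp (phih k hk) = MonoidHom.id (PresentedGroup (wirtingerRels k)) := by
  apply PresentedGroup.ext
  intro j
  rw [MonoidHom.comp_apply, MonoidHom.id_apply, phih_of, show f k j = F k j.val from rfl,
    psih_F k hk j.val (ZMod.val_lt j), ZMod.natCast_rightInverse j]
  rfl

lemma comp2 (k : ℕ) (hk : 0 < k) :
    (phih k hk).comp (psih k hk) = MonoidHom.id (PresentedGroup (torusRels k)) := by
  apply PresentedGroup.ext
  intro i
  rw [MonoidHom.comp_apply, MonoidHom.id_apply]
  fin_cases i
  · show phih k hk (psih k hk (PresentedGroup.of (0 : Fin 2))) = PresentedGroup.of (0 : Fin 2)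
    rw [show (PresentedGroup.of 0 : PresentedGroup (torusRels k)) = aT k from rfl, psih_a,
      phih_c k hk]
  · show phih k hk (psih k hk (PresentedGroup.of (1 : Fin 2))) = PresentedGroup.of (1 : Fin 2)
    rw [show (PresentedGroup.of 1 : PresentedGroup (torusRels k)) = bT k from rfl, psih_b,
      map_mul, map_inv, map_inv, map_pow, phih_c k hk,
      show phih k hk (Xz k 0) = F k (ZMod.val (0 : ZMod (2 * k + 1))) from phih_of k hk 0,
      ZMod.val_zero, F_zero, inv_inv, uT, bT]
    group

noncomputable def eqv (k : ℕ) (hk : 0 < k) :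
    PresentedGroup (wirtingerRels k) ≃* PresentedGroup (torusRels k) :=
  MonoidHom.toMulEquiv (phih k hk) (psih k hk) (comp1 k hk) (comp2 k hk)

lemma eqv_of (k : ℕ) (hk : 0 < k) (j : ZMod (2 * k + 1)) :
    eqv k hk (PresentedGroup.of j) = f k j :=
  phih_of k hk j

end TKP

theorem torus_knot_group_presentation (k : ℕ) (hk : 0 < k) :
    let x : ℕ → PresentedGroup (wirtingerRels k) :=
      fun i => PresentedGroup.of ((i : ZMod (2 * k + 1)))
    let a : PresentedGroup (torusRels k) := PresentedGroup.of 0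
    let b : PresentedGroup (torusRels k) := PresentedGroup.of 1
    ∃ φ : PresentedGroup (wirtingerRels k) ≃* PresentedGroup (torusRels k),
      (∀ s : ℕ, s ≤ k →
        φ (x (2 * (k - s) + 1)) = a ^ s * (a ^ k * b)⁻¹ * (a ^ s)⁻¹) ∧
      (∀ s : ℕ, s ≤ k - 1 →
        φ (x (2 * (k - s))) = a ^ s * (a ^ (k + 1) * b) * (a ^ s)⁻¹) := by
  intro x a b
  refine ⟨TKP.eqv k hk, ?_, ?_⟩
  · intro s hs
    rw [show x (2 * (k - s) + 1) = PresentedGroup.of ((2 * (k - s) + 1 : ℕ) : ZMod (2 * k + 1))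
        from rfl,
      TKP.eqv_of, show TKP.f k ((2 * (k - s) + 1 : ℕ) : ZMod (2 * k + 1)) =
        TKP.F k (((2 * (k - s) + 1 : ℕ) : ZMod (2 * k + 1)).val) from rfl, ZMod.val_natCast]
    rcases Nat.eq_zero_or_pos s with rfl | hs1
    · rw [Nat.sub_zero, Nat.mod_self, TKP.F_zero]
      show (TKP.uT k)⁻¹ = TKP.aT k ^ 0 * (TKP.aT k ^ k * TKP.bT k)⁻¹ * (TKP.aT k ^ 0)⁻¹
      rw [TKP.uT]
      group
    · rw [Nat.mod_eq_of_lt (by omega), TKP.F_odd k (k - s) (by omega),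
        show k - (k - s) = s by omega]
      show TKP.aT k ^ s * (TKP.uT k)⁻¹ * (TKP.aT k ^ s)⁻¹ =
        TKP.aT k ^ s * (TKP.aT k ^ k * TKP.bT k)⁻¹ * (TKP.aT k ^ s)⁻¹
      rw [TKP.uT]
  · intro s hs
    rw [show x (2 * (k - s)) = PresentedGroup.of ((2 * (k - s) : ℕ) : ZMod (2 * k + 1))
        from rfl,
      TKP.eqv_of, show TKP.f k ((2 * (k - s) : ℕ) : ZMod (2 * k + 1)) =
        TKP.F k (((2 * (k - s) : ℕ) : ZMod (2 * k + 1)).val) from rfl, ZMod.val_natCast,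
      Nat.mod_eq_of_lt (by omega), TKP.F_even k (k - s) (by omega),
      show k - (k - s) = s by omega]
    show TKP.aT k ^ s * (TKP.aT k * TKP.uT k) * (TKP.aT k ^ s)⁻¹ =
      TKP.aT k ^ s * (TKP.aT k ^ (k + 1) * TKP.bT k) * (TKP.aT k ^ s)⁻¹
    rw [TKP.uT, show TKP.aT k * (TKP.aT k ^ k * TKP.bT k) = TKP.aT k ^ (k + 1) * TKP.bT k by
      rw [pow_succ']; group]
end

section
/- In the group π = ⟨x_1, ..., x_{2k+1} | r_1, ..., r_{2k}⟩ with r_i = x_i x_{i+1} x_{i+2}^{-1} x_{i+1}^{-1} (indices mod 2k+1), the relation x_i x_{i+1} = x_{i+s} x_{i+s+1} holds for all i and s. -/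
theorem wirtinger_shift_relation (k : ℕ) (hk : 0 < k) :
    let x : ℕ → PresentedGroup (wirtingerRels k) :=
      fun i => PresentedGroup.of ((i : ZMod (2 * k + 1)))
    ∀ i s : ℕ, x i * x (i + 1) = x (i + s) * x (i + s + 1) := by
  intro x
  set n := 2 * k + 1 with hn
  -- the relator relation
  have hrel : ∀ i : ℕ, 1 ≤ i → i ≤ 2 * k → x i * x (i + 1) = x (i + 1) * x (i + 2) := by
    intro i h1 h2
    have hmem : (xF k i * xF k (i + 1) * (xF k (i + 2))⁻¹ * (xF k (i + 1))⁻¹ : FreeGroup (ZMod n)) ∈ wirtingerRels k :=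
      ⟨i, h1, h2, rfl⟩
    have h1 : PresentedGroup.mk (wirtingerRels k)
        (xF k i * xF k (i + 1) * (xF k (i + 2))⁻¹ * (xF k (i + 1))⁻¹) = 1 := by
      have := Subgroup.subset_normalClosure hmem
      exact (QuotientGroup.eq_one_iff _).mpr this
    have h2 : x i * x (i + 1) * (x (i + 2))⁻¹ * (x (i + 1))⁻¹ = 1 := by
      simpa [xF, map_mul, map_inv, x, PresentedGroup.of] using h1
    exact mul_inv_eq_iff_eq_mul.mp (mul_inv_eq_one.mp h2)
  -- periodicity
  have hper : ∀ i : ℕ, x (i + n) = x i := by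
    intro i
    have : ((i + n : ℕ) : ZMod n) = (i : ZMod n) := by
      push_cast [ZMod.natCast_self]
      ring
    simp only [x, this]
  -- chain : f 1 = f j for 1 ≤ j ≤ 2k+1
  have hchain : ∀ j : ℕ, 1 ≤ j → j ≤ n → x 1 * x 2 = x j * x (j + 1) := by
    intro j h1 h2
    induction j with
    | zero => omega
    | succ m ih =>
      rcases Nat.eq_or_lt_of_le h1 with h | h
      · simp [← h]
      · have hm1 : 1 ≤ m := by omega
        have hm2 : m ≤ 2 * k := by omega
        rw [ih hm1 (by omega)]
        have := hrel m hm1 hm2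
        simpa using this
  have h01 : x 0 * x 1 = x 1 * x 2 := by
    have := hchain n (by omega) le_rfl
    have hp0 : x n = x 0 := by have := hper 0; simpa using this
    have hp1 : x (n + 1) = x 1 := by simpa [Nat.add_comm] using hper 1
    rw [this, hp0, hp1]
  -- step for all i
  have hstep : ∀ i : ℕ, x i * x (i + 1) = x (i + 1) * x (i + 2) := by
    intro i
    induction i using Nat.strong_induction_on with
    | _ i ih =>
      rcases Nat.lt_or_ge i n with h | h
      · rcases Nat.eq_zero_or_pos i with h0 | h0
        · subst h0
          rw [show (0:ℕ)+1 = 1 from rfl, show (0:ℕ)+2 = 2 from rfl]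
          exact h01
        · exact hrel i h0 (by omega)
      · obtain ⟨j, rfl⟩ := Nat.exists_eq_add_of_le h
        have hlt : j < n + j := by omega
        have := ih j hlt
        have e0 : n + j = j + n := by ring
        have e1 : j + n + 1 = (j + 1) + n := by ring
        have e2 : j + n + 2 = (j + 2) + n := by ring
        rw [e0, e1, e2, hper, hper, hper]
        exact this
  intro i s
  induction s with
  | zero => rfl
  | succ t ih =>
    rw [ih]
    have := hstep (i + t)
    have e : i + (t + 1) = i + t + 1 := by ring
    rw [e]
    simpa [add_assoc] using this
end

section
/- Let ξ = exp(2πi/(2k+1)), let 1 ≤ θ ≤ k and 1 ≤ e ≤ k with e ≠ θ, and let G(t) = (1/2)(t^{2k+1} ξ^{kθ} − t^{k+1} − t^k + ξ^{(k+1)θ})(t^{−2k−1} + 1). Then G(ξ^e) = 2(Re(ξ^{kθ}) − Re(ξ^{ke})) = −4 sin(πk(θ+e)/(2k+1)) sin(πk(θ−e)/(2k+1)). -/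
open Complex Real

theorem G_eval_at_root_of_unity (k : ℕ) (hk : 0 < k) (θ e : ℕ)
    (hθ : 1 ≤ θ) (hθk : θ ≤ k) (he : 1 ≤ e) (hek : e ≤ k) (hne : e ≠ θ) :
    let ξ : ℂ := Complex.exp (2 * Real.pi * Complex.I / (2 * k + 1))
    let G : ℂ → ℂ := fun t =>
      (1 / 2) * (t ^ (2 * k + 1) * ξ ^ (k * θ) - t ^ (k + 1) - t ^ k + ξ ^ ((k + 1) * θ)) *
        (t ^ (-(2 * (k : ℤ) + 1)) + 1)
    G (ξ ^ e) = 2 * (((ξ ^ (k * θ)).re : ℂ) - ((ξ ^ (k * e)).re : ℂ)) ∧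
    G (ξ ^ e) = -4 * (Real.sin (Real.pi * k * (θ + e) / (2 * k + 1)) : ℂ) *
      (Real.sin (Real.pi * k * ((θ : ℝ) - e) / (2 * k + 1)) : ℂ) := by
  intro ξ G
  have hξdef : ξ = Complex.exp (2 * Real.pi * Complex.I / (2 * (k : ℂ) + 1)) := rfl
  have hNR : (2 * (k : ℝ) + 1) ≠ 0 := by positivity
  have hNC : (2 * (k : ℂ) + 1) ≠ 0 := by
    have h : ((2 * k + 1 : ℕ) : ℂ) ≠ 0 := Nat.cast_ne_zero.mpr (by omega)
    push_cast at h; exact h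
  set R : ℕ → ℝ := fun n => 2 * Real.pi * n / (2 * k + 1) with hRdef
  have hξpow : ∀ n : ℕ, ξ ^ n = Complex.exp ((R n : ℝ) * Complex.I) := by
    intro n
    rw [hξdef, ← Complex.exp_nat_mul]
    congr 1
    simp only [hRdef]
    push_cast
    field_simp
  have hξN : ξ ^ (2 * k + 1) = 1 := by
    rw [hξdef, ← Complex.exp_nat_mul,
      show ((2 * k + 1 : ℕ) : ℂ) * (2 * Real.pi * Complex.I / (2 * (k : ℂ) + 1))
          = 2 * Real.pi * Complex.I by push_cast; field_simp]
    exact Complex.exp_two_pi_mul_I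
  have hconj : ∀ n : ℕ, ξ ^ ((k + 1) * n) = Complex.exp (((-(R (k * n)) : ℝ) : ℂ) * Complex.I) := by
    intro n
    have h1 : ξ ^ ((k + 1) * n) * ξ ^ (k * n) = 1 := by
      rw [← pow_add, show (k + 1) * n + k * n = (2 * k + 1) * n by ring, pow_mul, hξN, one_pow]
    rw [eq_inv_of_mul_eq_one_left h1, hξpow (k * n), ← Complex.exp_neg]
    push_cast
    ring_nf
  have hz1 : (ξ ^ e) ^ (2 * k + 1) = 1 := by
    rw [← pow_mul, mul_comm, pow_mul, hξN, one_pow]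
  have hz2 : (ξ ^ e) ^ (-(2 * (k : ℤ) + 1)) = 1 := by
    rw [show (-(2 * (k : ℤ) + 1)) = -((2 * k + 1 : ℕ) : ℤ) by push_cast; ring,
      zpow_neg, zpow_natCast, hz1, inv_one]
  have key : G (ξ ^ e) = Complex.exp ((R (k * θ) : ℝ) * Complex.I)
      + Complex.exp (((-(R (k * θ)) : ℝ) : ℂ) * Complex.I)
      - (Complex.exp ((R (k * e) : ℝ) * Complex.I)
        + Complex.exp (((-(R (k * e)) : ℝ) : ℂ) * Complex.I)) := by
    show (1 / 2) * ((ξ ^ e) ^ (2 * k + 1) * ξ ^ (k * θ) - (ξ ^ e) ^ (k + 1) - (ξ ^ e) ^ k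
        + ξ ^ ((k + 1) * θ)) * ((ξ ^ e) ^ (-(2 * (k : ℤ) + 1)) + 1) = _
    rw [hz1, hz2,
      show (ξ ^ e) ^ (k + 1) = ξ ^ ((k + 1) * e) by rw [← pow_mul, Nat.mul_comm e (k + 1)],
      show (ξ ^ e) ^ k = ξ ^ (k * e) by rw [← pow_mul, Nat.mul_comm e k],
      hconj θ, hconj e, hξpow (k * θ), hξpow (k * e)]
    ring
  have hcos : ∀ n : ℕ, Complex.exp ((R n : ℝ) * Complex.I)
      + Complex.exp (((-(R n) : ℝ) : ℂ) * Complex.I) = 2 * ((Real.cos (R n) : ℝ) : ℂ) := by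
    intro n
    rw [Complex.ofReal_cos, Complex.two_cos]
    push_cast
    ring_nf
  have hre : ∀ n : ℕ, (ξ ^ n).re = Real.cos (R n) := by
    intro n
    rw [hξpow n, Complex.exp_ofReal_mul_I_re]
  constructor
  · rw [key, hcos, hcos, hre, hre]
    ring
  · rw [key, hcos, hcos]
    have hreal : 2 * (Real.cos (R (k * θ)) - Real.cos (R (k * e)))
        = -4 * Real.sin (Real.pi * k * (θ + e) / (2 * k + 1))
          * Real.sin (Real.pi * k * ((θ : ℝ) - e) / (2 * k + 1)) := by
      rw [Real.cos_sub_cos,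
        show (R (k * θ) + R (k * e)) / 2 = Real.pi * k * (θ + e) / (2 * k + 1) by
          simp only [hRdef]; push_cast; field_simp,
        show (R (k * θ) - R (k * e)) / 2 = Real.pi * k * ((θ : ℝ) - e) / (2 * k + 1) by
          simp only [hRdef]; push_cast; field_simp]
      ring
    calc 2 * ((Real.cos (R (k * θ)) : ℂ)) - 2 * ((Real.cos (R (k * e)) : ℂ))
        = ((2 * (Real.cos (R (k * θ)) - Real.cos (R (k * e))) : ℝ) : ℂ) := by push_cast; ring
      _ = _ := by rw [hreal]; push_cast; ring
end

section
/- Let k ≥ 1, let 1 ≤ θ ≤ k and 1 ≤ e ≤ k with e ≠ θ, and set G(ξ^e) = −4 sin(πk(θ+e)/(2k+1)) sin(πk(θ−e)/(2k+1)). Then (−1)^{θ+1} G(ξ^e) > 0 if e < θ and θ+e is even; (−1)^{θ+1} G(ξ^e) < 0 if θ < e and θ+e is even; and (−1)^{θ+1} G(ξ^e) < 0 if θ+e is odd. -/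
open Real

lemma aux_even (k j : ℕ) (hj : 1 ≤ j) (hjk : j ≤ k) :
    ∃ S : ℝ, 0 < S ∧
      Real.sin (Real.pi * k * (2 * j) / (2 * k + 1)) = (-1) ^ (j + 1) * S := by
  have h2k1 : (0:ℝ) < 2 * (k:ℝ) + 1 := by positivity
  refine ⟨Real.sin (Real.pi * j / (2 * k + 1)), ?_, ?_⟩
  · apply Real.sin_pos_of_pos_of_lt_pi
    · have hj' : (0:ℝ) < j := by exact_mod_cast hj
      positivity
    · rw [div_lt_iff₀ h2k1]
      have hjlt : (j:ℝ) < 2 * k + 1 := by exact_mod_cast (by omega : j < 2 * k + 1)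
      nlinarith [Real.pi_pos]
  · have harg : Real.pi * k * (2 * j) / (2 * k + 1)
        = (j : ℝ) * Real.pi - Real.pi * j / (2 * k + 1) := by
      field_simp; ring
    rw [harg, Real.sin_nat_mul_pi_sub]
    ring

lemma aux_odd (k j : ℕ) (hj : 2 * j + 1 ≤ 2 * k) :
    ∃ S : ℝ, 0 < S ∧
      Real.sin (Real.pi * k * (2 * j + 1) / (2 * k + 1)) = (-1) ^ j * S := by
  have h2k1 : (0:ℝ) < 2 * (k:ℝ) + 1 := by positivity
  refine ⟨Real.cos (Real.pi * (2 * j + 1) / (2 * (2 * k + 1))), ?_, ?_⟩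
  · apply Real.cos_pos_of_mem_Ioo
    constructor
    · have : (0:ℝ) < Real.pi * (2 * j + 1) / (2 * (2 * k + 1)) := by positivity
      linarith [Real.pi_pos]
    · rw [div_lt_iff₀ (by positivity)]
      have : (2 * (j:ℝ) + 1) < 2 * k + 1 := by exact_mod_cast (by omega : 2*j+1 < 2*k+1)
      nlinarith [Real.pi_pos]
  · have harg : Real.pi * k * (2 * j + 1) / (2 * k + 1)
        = ((j : ℝ) * Real.pi - Real.pi * (2 * j + 1) / (2 * (2 * k + 1))) + Real.pi / 2 := by
      field_simp; ring
    rw [harg, Real.sin_add_pi_div_two, Real.cos_nat_mul_pi_sub]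

theorem sign_of_G_jump (k θ e : ℕ) (hk : 1 ≤ k)
    (hθ : 1 ≤ θ) (hθk : θ ≤ k) (he : 1 ≤ e) (hek : e ≤ k) (hne : e ≠ θ) :
    let G : ℝ := -4 * Real.sin (Real.pi * k * (θ + e) / (2 * k + 1)) *
      Real.sin (Real.pi * k * ((θ : ℝ) - e) / (2 * k + 1))
    (e < θ → Even (θ + e) → 0 < (-1 : ℝ) ^ (θ + 1) * G) ∧
    (θ < e → Even (θ + e) → (-1 : ℝ) ^ (θ + 1) * G < 0) ∧
    (Odd (θ + e) → (-1 : ℝ) ^ (θ + 1) * G < 0) := by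
  intro G
  refine ⟨?_, ?_, ?_⟩
  · -- e < θ, even
    intro hlt hev
    obtain ⟨a, ha⟩ := hev
    have ha2 : θ + e = 2 * a := by omega
    have hb0 : Even (θ - e) := (Nat.even_sub hlt.le).2 (by
      rcases Nat.even_add.1 ⟨a, ha⟩ with h; exact h)
    obtain ⟨b, hb⟩ := hb0
    have hb2 : θ = e + 2 * b := by omega
    have haR : (θ:ℝ) + e = 2 * (a:ℝ) := by exact_mod_cast ha2
    have hbR : (θ:ℝ) - e = 2 * (b:ℝ) := by
      have : (θ:ℝ) = e + 2 * b := by exact_mod_cast hb2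
      linarith
    obtain ⟨S1, hS1p, hS1⟩ := aux_even k a (by omega) (by omega)
    obtain ⟨S2, hS2p, hS2⟩ := aux_even k b (by omega) (by omega)
    show 0 < (-1:ℝ) ^ (θ + 1) * (-4 * Real.sin (Real.pi * k * ((θ:ℝ) + e) / (2 * k + 1)) *
      Real.sin (Real.pi * k * ((θ : ℝ) - e) / (2 * k + 1)))
    rw [haR, hbR, hS1, hS2]
    have hθab : θ = a + b := by omega
    rw [hθab]
    have h1 : (-1:ℝ) ^ (a + b + 1) * (-1) ^ (a + 1) * (-1) ^ (b + 1) = -1 := by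
      rw [← pow_add, ← pow_add]
      exact Odd.neg_one_pow ⟨a + b + 1, by ring⟩
    nlinarith [mul_pos hS1p hS2p]
  · -- θ < e, even
    intro hlt hev
    obtain ⟨a, ha⟩ := hev
    have ha2 : θ + e = 2 * a := by omega
    have hb0 : Even (e - θ) := (Nat.even_sub hlt.le).2 (by
      rcases Nat.even_add.1 ⟨a, ha⟩ with h; exact h.symm)
    obtain ⟨b, hb⟩ := hb0
    have hb2 : e = θ + 2 * b := by omega
    have haR : (θ:ℝ) + e = 2 * (a:ℝ) := by exact_mod_cast ha2
    have hbR : (θ:ℝ) - e = -(2 * (b:ℝ)) := by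
      have : (e:ℝ) = θ + 2 * b := by exact_mod_cast hb2
      linarith
    obtain ⟨S1, hS1p, hS1⟩ := aux_even k a (by omega) (by omega)
    obtain ⟨S2, hS2p, hS2⟩ := aux_even k b (by omega) (by omega)
    show (-1:ℝ) ^ (θ + 1) * (-4 * Real.sin (Real.pi * k * ((θ:ℝ) + e) / (2 * k + 1)) *
      Real.sin (Real.pi * k * ((θ : ℝ) - e) / (2 * k + 1))) < 0
    rw [haR, hbR,
      show Real.pi * k * (-(2 * (b:ℝ))) / (2 * k + 1)
        = -(Real.pi * k * (2 * (b:ℝ)) / (2 * k + 1)) by ring,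
      Real.sin_neg, hS1, hS2]
    have heab : e = a + b := by omega
    have hθab : θ = a - b := by omega
    have hab : a = θ + b := by omega
    rw [hab]
    have h1 : (-1:ℝ) ^ (θ + b + 1) * (-1) ^ (θ + 1) * (-1) ^ (b + 1) = -1 := by
      rw [← pow_add, ← pow_add]
      exact Odd.neg_one_pow ⟨θ + b + 1, by ring⟩
    nlinarith [mul_pos hS1p hS2p]
  · -- odd
    intro hodd
    obtain ⟨a, ha⟩ := hodd
    have ha2 : θ + e = 2 * a + 1 := ha
    have haR : (θ:ℝ) + e = 2 * (a:ℝ) + 1 := by exact_mod_cast ha2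
    obtain ⟨S1, hS1p, hS1⟩ := aux_odd k a (by omega)
    show (-1:ℝ) ^ (θ + 1) * (-4 * Real.sin (Real.pi * k * ((θ:ℝ) + e) / (2 * k + 1)) *
      Real.sin (Real.pi * k * ((θ : ℝ) - e) / (2 * k + 1))) < 0
    rw [haR, hS1]
    rcases lt_or_gt_of_ne hne with hlt | hlt
    · -- e < θ
      have hb0 : Odd (θ - e) := by
        rcases Nat.even_or_odd (θ - e) with hev | h
        · exfalso
          obtain ⟨c, hc⟩ := hev
          omega
        · exact h
      obtain ⟨b, hb⟩ := hb0
      have hbR : (θ:ℝ) - e = 2 * (b:ℝ) + 1 := by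
        have : (θ:ℝ) = e + (2 * b + 1) := by exact_mod_cast (by omega : θ = e + (2 * b + 1))
        linarith
      obtain ⟨S2, hS2p, hS2⟩ := aux_odd k b (by omega)
      rw [hbR, hS2]
      have hθab : θ = a + b + 1 := by omega
      rw [hθab]
      have h1 : (-1:ℝ) ^ (a + b + 1 + 1) * (-1) ^ a * (-1) ^ b = 1 := by
        rw [← pow_add, ← pow_add]
        exact Even.neg_one_pow ⟨a + b + 1, by ring⟩
      nlinarith [mul_pos hS1p hS2p]
    · -- θ < e
      have hb0 : Odd (e - θ) := by
        rcases Nat.even_or_odd (e - θ) with hev | h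
        · exfalso
          obtain ⟨c, hc⟩ := hev
          omega
        · exact h
      obtain ⟨b, hb⟩ := hb0
      have hbR : (θ:ℝ) - e = -(2 * (b:ℝ) + 1) := by
        have : (e:ℝ) = θ + (2 * b + 1) := by exact_mod_cast (by omega : e = θ + (2 * b + 1))
        linarith
      obtain ⟨S2, hS2p, hS2⟩ := aux_odd k b (by omega)
      rw [hbR,
        show Real.pi * k * (-(2 * (b:ℝ) + 1)) / (2 * k + 1)
          = -(Real.pi * k * (2 * (b:ℝ) + 1) / (2 * k + 1)) by ring,
        Real.sin_neg, hS2]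
      have hab : a = θ + b := by omega
      rw [hab]
      have h1 : (-1:ℝ) ^ (θ + 1) * (-1) ^ (θ + b) * (-1) ^ b = -1 := by
        rw [← pow_add, ← pow_add]
        exact Odd.neg_one_pow ⟨θ + b, by ring⟩
      nlinarith [mul_pos hS1p hS2p]
end

section
/- Let ξ be a primitive (2k+1)-st root of unity with k ≥ 1, θ an integer with 1 ≤ θ ≤ k, and define the 2×4 matrix M over ℂ[t^{±1}] by M = [[−ξ^{−kθ}, t^{−k−1}, −1, 1], [t^{−k}, −ξ^{kθ}, t, −1]]. Then the vectors v₁ = (t^{−k}ξ^{−kθ}, t^{−2k−1}, ξ^{−kθ}P_{2k}(t^{−1}), ξ^{−kθ}P_{2k}(t^{−1})) and v₂ = (0, t^{−1}−1, ξ^{(k+1)θ}−t^{k+1}, ξ^{−kθ}−t^{k}) satisfy v₁ · M^{#T} = 0 and v₂ · M^{#T} = 0, where # is the involution sending p(t) to the complex conjugate polynomial evaluated at t^{−1}, and are linearly independent over ℂ(t). -/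
open LaurentPolynomial Matrix

/-- The involution `#` on `ℂ[t,t⁻¹]` sending `p(t)` to `conj(p)(t⁻¹)`
(conjugate the coefficients and replace `t` by `t⁻¹`). -/
noncomputable def laurentHash (p : LaurentPolynomial ℂ) : LaurentPolynomial ℂ :=
  p.coeff.sum fun n a => LaurentPolynomial.C ((starRingEnd ℂ) a) * LaurentPolynomial.T (-n)

lemma laurentHash_C_mul_T (a : ℂ) (n : ℤ) :
    laurentHash (C a * T n) = C ((starRingEnd ℂ) a) * T (-n) := by
  rw [← single_eq_C_mul_T, laurentHash, AddMonoidAlgebra.coeff_single, Finsupp.sum_single_index]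
  simp

lemma laurentHash_C (a : ℂ) : laurentHash (C a) = C ((starRingEnd ℂ) a) := by
  rw [← mul_one (C a), ← T_zero, laurentHash_C_mul_T]; simp

lemma laurentHash_T (n : ℤ) : laurentHash (T n) = T (-n) := by
  rw [← one_mul (T n), ← _root_.map_one C, laurentHash_C_mul_T]; simp

lemma laurentHash_one : laurentHash (1 : LaurentPolynomial ℂ) = 1 := by
  rw [← _root_.map_one C, laurentHash_C]; simp

lemma laurentHash_neg_one : laurentHash (-1 : LaurentPolynomial ℂ) = -1 := by
  rw [show (-1 : LaurentPolynomial ℂ) = C (-1) by simp, laurentHash_C]; simp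

instance : IsDomain (LaurentPolynomial ℂ) := NoZeroDivisors.to_isDomain _

theorem kernel_of_partial3 (k : ℕ) (hk : 0 < k) (θ : ℕ) (hθ : 1 ≤ θ) (hθk : θ ≤ k) :
    let ξ : ℂ := Complex.exp (2 * Real.pi * Complex.I / (2 * k + 1))
    let M : Matrix (Fin 2) (Fin 4) (LaurentPolynomial ℂ) :=
      !![LaurentPolynomial.C (-ξ ^ (-(k : ℤ) * θ)), LaurentPolynomial.T (-((k : ℤ) + 1)),
           -1, 1;
         LaurentPolynomial.T (-(k : ℤ)), LaurentPolynomial.C (-ξ ^ ((k : ℤ) * θ)),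
           LaurentPolynomial.T 1, -1]
    -- `M^{#T}` : transpose composed with the involution `#`
    let MhashT : Matrix (Fin 4) (Fin 2) (LaurentPolynomial ℂ) := fun i j => laurentHash (M j i)
    let P2kInv : LaurentPolynomial ℂ := ∑ j ∈ Finset.range (2 * k + 1), LaurentPolynomial.T (-(j : ℤ))
    let v₁ : Fin 4 → LaurentPolynomial ℂ :=
      ![LaurentPolynomial.C (ξ ^ (-(k : ℤ) * θ)) * LaurentPolynomial.T (-(k : ℤ)),
        LaurentPolynomial.T (-(2 * (k : ℤ) + 1)),
        LaurentPolynomial.C (ξ ^ (-(k : ℤ) * θ)) * P2kInv,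
        LaurentPolynomial.C (ξ ^ (-(k : ℤ) * θ)) * P2kInv]
    let v₂ : Fin 4 → LaurentPolynomial ℂ :=
      ![0,
        LaurentPolynomial.T (-1) - 1,
        LaurentPolynomial.C (ξ ^ (((k : ℤ) + 1) * θ)) - LaurentPolynomial.T ((k : ℤ) + 1),
        LaurentPolynomial.C (ξ ^ (-(k : ℤ) * θ)) - LaurentPolynomial.T (k : ℤ)]
    Matrix.vecMul v₁ MhashT = 0 ∧ Matrix.vecMul v₂ MhashT = 0 ∧
    LinearIndependent (FractionRing (LaurentPolynomial ℂ))
      ![fun j => algebraMap (LaurentPolynomial ℂ) (FractionRing (LaurentPolynomial ℂ)) (v₁ j),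
        fun j => algebraMap (LaurentPolynomial ℂ) (FractionRing (LaurentPolynomial ℂ)) (v₂ j)] := by
  intro ξ M MhashT P2kInv v₁ v₂
  -- basic facts about ξ
  have hξ0 : ξ ≠ 0 := Complex.exp_ne_zero _
  have hconj : (starRingEnd ℂ) ξ = ξ⁻¹ := by
    rw [show ξ = Complex.exp (2 * Real.pi * Complex.I / (2 * k + 1)) from rfl,
      ← Complex.exp_conj, ← Complex.exp_neg]
    congr 1
    simp [map_div₀, Complex.conj_I, map_ofNat]
    ring
  have hconjpow : ∀ m : ℤ, (starRingEnd ℂ) (ξ ^ m) = ξ ^ (-m) := by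
    intro m
    rw [map_zpow₀, hconj, _root_.inv_zpow, ← _root_.zpow_neg]
  have hroot : ξ ^ (2 * (k:ℤ) + 1) = 1 := by
    have h' : (2 * (k:ℂ) + 1) ≠ 0 := by
      intro h
      have := congrArg Complex.re h
      push_cast at this
      simp at this
      linarith [this, Nat.cast_nonneg (α := ℝ) k]
    rw [show (2*(k:ℤ)+1) = ((2*k+1 : ℕ) : ℤ) by push_cast; ring, zpow_natCast]
    rw [show ξ = Complex.exp (2 * Real.pi * Complex.I / (2 * k + 1)) from rfl,
      ← Complex.exp_nat_mul,
      show ((2*k+1:ℕ):ℂ) = 2*(k:ℂ)+1 by push_cast; ring,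
      mul_div_cancel₀ _ h']
    exact Complex.exp_two_pi_mul_I
  set X : ℂ := ξ ^ (-(k : ℤ) * θ) with hXdef
  set Y : ℂ := ξ ^ ((k : ℤ) * θ) with hYdef
  set Z : ℂ := ξ ^ (((k : ℤ) + 1) * θ) with hZdef
  have hXY : X * Y = 1 := by
    rw [hXdef, hYdef, ← zpow_add₀ hξ0]
    simp
  have hZX : Z = X := by
    have h2 : ξ ^ ((2*(k:ℤ)+1) * θ) = 1 := by
      rw [_root_.zpow_mul, hroot, _root_.one_zpow]
    rw [hZdef, hXdef, show ((k:ℤ)+1)*(θ:ℤ) = -(k:ℤ)*θ + (2*(k:ℤ)+1)*θ by ring,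
      zpow_add₀ hξ0, h2, mul_one]
  have hXne : X ≠ 0 := zpow_ne_zero _ hξ0
  have hconjX : (starRingEnd ℂ) X = Y := by rw [hXdef, hconjpow]; rw [hYdef]; ring_nf
  have hconjY : (starRingEnd ℂ) Y = X := by rw [hYdef, hconjpow]; rw [hXdef]; ring_nf
  -- key Laurent polynomial identities
  have hCXY : (C X : LaurentPolynomial ℂ) * C Y = 1 := by rw [← _root_.map_mul, hXY, _root_.map_one]
  have hCZX : (C Z : LaurentPolynomial ℂ) = C X := by rw [hZX]
  have hT1 : (T (-(2*(k:ℤ)+1)) : LaurentPolynomial ℂ) * T ((k:ℤ)+1) = T (-(k:ℤ)) := by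
    rw [← T_add]; congr 1; ring
  have hT2 : (T (-(k:ℤ)) : LaurentPolynomial ℂ) * T (k:ℤ) = 1 := by
    rw [← T_add]; simp
  have hT3 : (T (-1) : LaurentPolynomial ℂ) * T ((k:ℤ)+1) = T (k:ℤ) := by
    rw [← T_add]; congr 1; ring
  have hP : P2kInv * (1 - T (-1)) = 1 - T (-(2 * (k:ℤ) + 1)) := by
    rw [show P2kInv = ∑ j ∈ Finset.range (2 * k + 1), (T (-(j : ℤ)) : LaurentPolynomial ℂ)
        from rfl, Finset.sum_mul]
    have hterm : ∀ j ∈ Finset.range (2*k+1), (T (-(j : ℤ)) : LaurentPolynomial ℂ) * (1 - T (-1))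
        = T (-(j:ℤ)) - T (-((j+1 : ℕ):ℤ)) := by
      intro j _
      rw [mul_sub, mul_one, ← T_add]
      congr 2
      push_cast; ring
    rw [Finset.sum_congr rfl hterm,
      Finset.sum_range_sub' (fun j => (T (-(j:ℤ)) : LaurentPolynomial ℂ))]
    push_cast
    simp [T_zero]
  -- hashed matrix entries
  have hM00 : MhashT 0 0 = -(C Y) := by
    show laurentHash (M 0 0) = _
    rw [show M 0 0 = C (-X) from rfl, laurentHash_C, map_neg, hconjX, map_neg]
  have hM10 : MhashT 1 0 = T ((k:ℤ)+1) := by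
    show laurentHash (M 0 1) = _
    rw [show M 0 1 = T (-((k:ℤ)+1)) from rfl, laurentHash_T, neg_neg]
  have hM20 : MhashT 2 0 = -1 := by
    show laurentHash (M 0 2) = _
    rw [show M 0 2 = -1 from rfl, laurentHash_neg_one]
  have hM30 : MhashT 3 0 = 1 := by
    show laurentHash (M 0 3) = _
    rw [show M 0 3 = 1 from rfl, laurentHash_one]
  have hM01 : MhashT 0 1 = T (k:ℤ) := by
    show laurentHash (M 1 0) = _
    rw [show M 1 0 = T (-(k:ℤ)) from rfl, laurentHash_T, neg_neg]
  have hM11 : MhashT 1 1 = -(C X) := by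
    show laurentHash (M 1 1) = _
    rw [show M 1 1 = C (-Y) from rfl, laurentHash_C, map_neg, hconjY, map_neg]
  have hM21 : MhashT 2 1 = T (-1) := by
    show laurentHash (M 1 2) = _
    rw [show M 1 2 = T 1 from rfl, laurentHash_T]
  have hM31 : MhashT 3 1 = -1 := by
    show laurentHash (M 1 3) = _
    rw [show M 1 3 = -1 from rfl, laurentHash_neg_one]
  refine ⟨?_, ?_, ?_⟩
  · funext j
    fin_cases j
    · show Matrix.vecMul v₁ MhashT 0 = 0
      rw [Matrix.vecMul, dotProduct]
      rw [Fin.sum_univ_four]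
      simp only [hM00, hM10, hM20, hM30, v₁]
      simp only [Matrix.cons_val_zero, Matrix.cons_val_one, Matrix.head_cons,
        Matrix.cons_val_two, Matrix.cons_val_three, Matrix.tail_cons]
      rw [← hXdef]
      linear_combination (-(T (-(k:ℤ)) : LaurentPolynomial ℂ)) * hCXY + hT1
    · show Matrix.vecMul v₁ MhashT 1 = 0
      rw [Matrix.vecMul, dotProduct]
      rw [Fin.sum_univ_four]
      simp only [hM01, hM11, hM21, hM31, v₁]
      simp only [Matrix.cons_val_zero, Matrix.cons_val_one, Matrix.head_cons,
        Matrix.cons_val_two, Matrix.cons_val_three, Matrix.tail_cons]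
      rw [← hXdef]
      linear_combination (C X : LaurentPolynomial ℂ) * hT2 + (-(C X : LaurentPolynomial ℂ)) * hP
  · funext j
    fin_cases j
    · show Matrix.vecMul v₂ MhashT 0 = 0
      rw [Matrix.vecMul, dotProduct]
      rw [Fin.sum_univ_four]
      simp only [hM00, hM10, hM20, hM30, v₂]
      simp only [Matrix.cons_val_zero, Matrix.cons_val_one, Matrix.head_cons,
        Matrix.cons_val_two, Matrix.cons_val_three, Matrix.tail_cons]
      rw [← hXdef, ← hZdef]
      linear_combination hT3 - hCZX
    · show Matrix.vecMul v₂ MhashT 1 = 0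
      rw [Matrix.vecMul, dotProduct]
      rw [Fin.sum_univ_four]
      simp only [hM01, hM11, hM21, hM31, v₂]
      simp only [Matrix.cons_val_zero, Matrix.cons_val_one, Matrix.head_cons,
        Matrix.cons_val_two, Matrix.cons_val_three, Matrix.tail_cons]
      rw [← hXdef, ← hZdef]
      linear_combination (T (-1) : LaurentPolynomial ℂ) * hCZX - hT3
  · have hinj := IsFractionRing.injective (LaurentPolynomial ℂ) (FractionRing (LaurentPolynomial ℂ))
    rw [show (![fun j => algebraMap (LaurentPolynomial ℂ) (FractionRing (LaurentPolynomial ℂ)) (v₁ j),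
        fun j => algebraMap (LaurentPolynomial ℂ) (FractionRing (LaurentPolynomial ℂ)) (v₂ j)] :
        Fin 2 → Fin 4 → FractionRing (LaurentPolynomial ℂ)) =
        ![fun j => algebraMap (LaurentPolynomial ℂ) _ (v₁ j),
          fun j => algebraMap (LaurentPolynomial ℂ) _ (v₂ j)] from rfl]
    rw [linearIndependent_fin2]
    constructor
    · intro h
      have h1 := congrFun h 1
      simp only [Matrix.cons_val_zero, Matrix.cons_val_one, Matrix.head_cons, Pi.zero_apply] at h1
      have h2 : v₂ 1 = 0 := hinj (by rw [h1, map_zero])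
      have h3 : (T (-1) : LaurentPolynomial ℂ) = 1 := by
        have h2' : (T (-1) : LaurentPolynomial ℂ) - 1 = 0 := by
          simpa only [v₂, Matrix.cons_val_zero, Matrix.cons_val_one, Matrix.head_cons] using h2
        exact sub_eq_zero.mp h2'
      have h4 := congrArg LaurentPolynomial.degree h3
      rw [degree_T, ← T_zero, degree_T] at h4
      norm_num at h4
    · intro a h
      have h0 := congrFun h 0
      simp only [Matrix.cons_val_zero, Matrix.cons_val_one, Matrix.head_cons,
        Pi.smul_apply, smul_eq_mul] at h0
      have hv20 : v₂ 0 = 0 := rfl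
      have hv10 : v₁ 0 = C X * T (-(k:ℤ)) := rfl
      rw [hv20, map_zero, mul_zero, hv10] at h0
      have hne : (C X : LaurentPolynomial ℂ) * T (-(k:ℤ)) ≠ 0 := by
        intro hc
        have := congrArg LaurentPolynomial.degree hc
        rw [degree_C_mul_T _ _ hXne, degree_zero] at this
        exact absurd this (by simp)
      exact hne (hinj (by rw [← h0, map_zero]))
end

section
/- Let ξ be a primitive (2k+1)-st root of unity, 1 ≤ θ ≤ k, and let Z be the 4×4 matrix over ℂ[t^{±1}] whose rows are Z₁ = (ξ^{−(k−1)θ}t^{k+1}/(ξ^{θ}−ξ^{−θ}), ξ^{−θ}/(ξ^{θ}−ξ^{−θ}), 0, −t^{2k+1}ξ^{θ}P_{2k}(t^{−1}ξ^{θ})/(ξ^{θ}−ξ^{−θ})), Z₂ = ((t^{−1}ξ^{θ}−1)ξ^{−kθ}t^{k+1}, t^{−1}ξ^{−θ}−1, 0, t^{2k+1}−1), Z₃ = (0, t^{−k−2}ξ^{(k−1)θ}−ξ^{kθ}t^{−k−1}, 1, −ξ^{kθ}t^{−k−1}), Z₄ = (0,0,0,1). Then det(Z) = −t^{k+1} ξ^{−kθ};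 in particular Z₁, Z₂, Z₃, Z₄ form a basis of ℂ(t)⁴. -/
open RatFunc Matrix
set_option maxHeartbeats 2000000

theorem my_det_fin_four {R : Type*} [CommRing R] (M : Matrix (Fin 4) (Fin 4) R) :
    M.det =
      M 0 0 * M 1 1 * M 2 2 * M 3 3 - M 0 0 * M 1 1 * M 2 3 * M 3 2 -
      M 0 0 * M 1 2 * M 2 1 * M 3 3 + M 0 0 * M 1 2 * M 2 3 * M 3 1 +
      M 0 0 * M 1 3 * M 2 1 * M 3 2 - M 0 0 * M 1 3 * M 2 2 * M 3 1 -
      M 0 1 * M 1 0 * M 2 2 * M 3 3 + M 0 1 * M 1 0 * M 2 3 * M 3 2 +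
      M 0 1 * M 1 2 * M 2 0 * M 3 3 - M 0 1 * M 1 2 * M 2 3 * M 3 0 -
      M 0 1 * M 1 3 * M 2 0 * M 3 2 + M 0 1 * M 1 3 * M 2 2 * M 3 0 +
      M 0 2 * M 1 0 * M 2 1 * M 3 3 - M 0 2 * M 1 0 * M 2 3 * M 3 1 -
      M 0 2 * M 1 1 * M 2 0 * M 3 3 + M 0 2 * M 1 1 * M 2 3 * M 3 0 +
      M 0 2 * M 1 3 * M 2 0 * M 3 1 - M 0 2 * M 1 3 * M 2 1 * M 3 0 -
      M 0 3 * M 1 0 * M 2 1 * M 3 2 + M 0 3 * M 1 0 * M 2 2 * M 3 1 +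
      M 0 3 * M 1 1 * M 2 0 * M 3 2 - M 0 3 * M 1 1 * M 2 2 * M 3 0 -
      M 0 3 * M 1 2 * M 2 0 * M 3 1 + M 0 3 * M 1 2 * M 2 1 * M 3 0 := by
  rw [Matrix.det_succ_row_zero, Fin.sum_univ_four]
  simp +decide [Matrix.det_fin_three, Matrix.submatrix, Fin.succAbove,
    show Fin.succ (2 : Fin 3) = 3 from rfl, show Fin.castSucc (2 : Fin 3) = 2 from rfl]
  ring


theorem det_Z_matrix (k : ℕ) (hk : 0 < k) (θ : ℕ) (hθ : 1 ≤ θ) (hθk : θ ≤ k) :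
    let ξ : ℂ := Complex.exp (2 * Real.pi * Complex.I / (2 * k + 1))
    let t : RatFunc ℂ := RatFunc.X
    let Cc : ℂ → RatFunc ℂ := RatFunc.C
    let P2k : RatFunc ℂ → RatFunc ℂ := fun u => ∑ j ∈ Finset.range (2 * k + 1), u ^ j
    let Z₁ : Fin 4 → RatFunc ℂ :=
      ![Cc (ξ ^ (-((k : ℤ) - 1) * θ) / (ξ ^ (θ : ℤ) - ξ ^ (-(θ : ℤ)))) * t ^ (k + 1),
        Cc (ξ ^ (-(θ : ℤ)) / (ξ ^ (θ : ℤ) - ξ ^ (-(θ : ℤ)))),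
        0,
        -Cc (ξ ^ (θ : ℤ) / (ξ ^ (θ : ℤ) - ξ ^ (-(θ : ℤ)))) * t ^ (2 * k + 1) *
          P2k (t⁻¹ * Cc (ξ ^ (θ : ℤ)))]
    let Z₂ : Fin 4 → RatFunc ℂ :=
      ![(t⁻¹ * Cc (ξ ^ (θ : ℤ)) - 1) * Cc (ξ ^ (-(k : ℤ) * θ)) * t ^ (k + 1),
        t⁻¹ * Cc (ξ ^ (-(θ : ℤ))) - 1,
        0,
        t ^ (2 * k + 1) - 1]
    let Z₃ : Fin 4 → RatFunc ℂ :=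
      ![0,
        t ^ (-((k : ℤ) + 2)) * Cc (ξ ^ (((k : ℤ) - 1) * θ)) -
          Cc (ξ ^ ((k : ℤ) * θ)) * t ^ (-((k : ℤ) + 1)),
        1,
        -Cc (ξ ^ ((k : ℤ) * θ)) * t ^ (-((k : ℤ) + 1))]
    let Z₄ : Fin 4 → RatFunc ℂ := ![0, 0, 0, 1]
    Matrix.det (Matrix.of ![Z₁, Z₂, Z₃, Z₄]) = -t ^ (k + 1) * Cc (ξ ^ (-(k : ℤ) * θ)) ∧
    LinearIndependent (RatFunc ℂ) ![Z₁, Z₂, Z₃, Z₄] := by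
  intro ξ t Cc P2k Z₁ Z₂ Z₃ Z₄
  have hprim : IsPrimitiveRoot ξ (2 * k + 1) := by
    have := Complex.isPrimitiveRoot_exp (2 * k + 1) (by omega)
    convert this using 3
    push_cast; ring
  have hξ : ξ ≠ 0 := hprim.ne_zero (by omega)
  have hd : ξ ^ (θ : ℤ) - ξ ^ (-(θ : ℤ)) ≠ 0 := by
    rw [sub_ne_zero]
    intro h
    have h2 : ξ ^ (2 * θ) = 1 := by
      have : ξ ^ ((θ : ℤ) + θ) = ξ ^ ((θ : ℤ) + -θ) := by
        rw [zpow_add₀ hξ, zpow_add₀ hξ, h]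
      simpa [← zpow_natCast, two_mul, push_cast] using this
    exact hprim.pow_ne_one_of_pos_of_lt (by omega) (by omega) h2
  have ht : t ≠ 0 := RatFunc.X_ne_zero
  have hCinj : Function.Injective Cc := RatFunc.C_injective
  have hCξ : Cc ξ ≠ 0 := fun h => hξ (hCinj (by simpa [Cc] using h))
  have h1 : (Cc ξ) ^ (θ : ℤ) - (Cc ξ) ^ (-(θ : ℤ)) ≠ 0 := by
    have heq : Cc (ξ ^ (θ : ℤ) - ξ ^ (-(θ : ℤ))) =
        (Cc ξ) ^ (θ : ℤ) - (Cc ξ) ^ (-(θ : ℤ)) := by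
      simp [Cc, map_zpow₀]
    rw [← heq]
    exact fun h => hd (hCinj (by simpa [Cc] using h))
  have hdet : Matrix.det (Matrix.of ![Z₁, Z₂, Z₃, Z₄]) =
      -t ^ (k + 1) * Cc (ξ ^ (-(k : ℤ) * θ)) := by
    rw [my_det_fin_four]
    simp only [Z₁, Z₂, Z₃, Z₄, Matrix.of_apply, Matrix.cons_val', Matrix.cons_val_zero,
      Matrix.cons_val_one, Matrix.head_cons, Matrix.empty_val', Matrix.cons_val_fin_one,
      Matrix.head_fin_const]
    simp only [Cc, map_div₀, map_zpow₀, map_sub]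
    simp [Matrix.cons_val_succ, Matrix.vecHead, Matrix.vecTail]
    have h2θ : ξ ^ (2 * θ) ≠ 1 := hprim.pow_ne_one_of_pos_of_lt (by omega) (by omega)
    have hx2 : (Cc ξ) ^ (θ * 2) - 1 ≠ 0 := by
      rw [sub_ne_zero]
      intro h
      apply h2θ
      apply hCinj
      simpa [Cc, map_pow, two_mul, mul_comm] using h
    have hx2' : (RatFunc.C ξ : RatFunc ℂ) ^ (θ * 2) - 1 ≠ 0 := hx2
    have hCξ' : (RatFunc.C ξ : RatFunc ℂ) ≠ 0 := hCξ
    have hA : -(RatFunc.C ξ ^ θ * t) + RatFunc.C ξ ^ (θ * 3) * t ≠ 0 := by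
      have he : -(RatFunc.C ξ ^ θ * t) + RatFunc.C ξ ^ (θ * 3) * t =
          (RatFunc.C ξ ^ θ * t) * ((RatFunc.C ξ) ^ (θ * 2) - 1) := by ring
      rw [he]
      exact mul_ne_zero (mul_ne_zero (pow_ne_zero _ hCξ') ht) hx2'
    have hkz : (RatFunc.C ξ : RatFunc ℂ) ^ ((k : ℤ) * θ) ≠ 0 := zpow_ne_zero _ hCξ'
    have hB : RatFunc.C ξ ^ (θ * 2) * t * RatFunc.C ξ ^ ((k : ℤ) * θ) -
        t * RatFunc.C ξ ^ ((k : ℤ) * θ) ≠ 0 := by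
      have he : RatFunc.C ξ ^ (θ * 2) * t * RatFunc.C ξ ^ ((k : ℤ) * θ) -
          t * RatFunc.C ξ ^ ((k : ℤ) * θ) =
          (t * (RatFunc.C ξ) ^ ((k : ℤ) * θ)) * ((RatFunc.C ξ) ^ (θ * 2) - 1) := by ring
      rw [he]
      exact mul_ne_zero (mul_ne_zero ht hkz) hx2'
    have hkz : (RatFunc.C ξ : RatFunc ℂ) ^ ((k : ℤ) * θ) ≠ 0 := zpow_ne_zero _ hCξ'
    have huu : (RatFunc.C ξ : RatFunc ℂ) ^ θ - (RatFunc.C ξ ^ θ)⁻¹ ≠ 0 := by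
      have h1' := h1
      rwa [_root_.zpow_neg, zpow_natCast] at h1'
    have r1 : (RatFunc.C ξ : RatFunc ℂ) ^ ((1 - (k : ℤ)) * θ) =
        RatFunc.C ξ ^ θ * (RatFunc.C ξ ^ ((k : ℤ) * θ))⁻¹ := by
      rw [show ((1 - (k : ℤ)) * θ) = (θ : ℤ) + -((k : ℤ) * θ) by ring, zpow_add₀ hCξ',
        _root_.zpow_neg, zpow_natCast]
    rw [r1]
    field_simp
    have hy : (RatFunc.C ξ : RatFunc ℂ) ^ θ * RatFunc.C ξ ^ θ - 1 ≠ 0 := by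
      rw [show (RatFunc.C ξ : RatFunc ℂ) ^ θ * RatFunc.C ξ ^ θ = RatFunc.C ξ ^ (θ * 2) by ring]
      exact hx2'
    rw [div_eq_iff (by rw [sq]; exact hy)]
    ring
  refine ⟨hdet, ?_⟩
  have hli : LinearIndependent (RatFunc ℂ) (fun i => (Matrix.of ![Z₁, Z₂, Z₃, Z₄]) i) := by
    change LinearIndependent _ (Matrix.of ![Z₁, Z₂, Z₃, Z₄]).row
    rw [Matrix.linearIndependent_rows_iff_isUnit, Matrix.isUnit_iff_isUnit_det, hdet,
      isUnit_iff_ne_zero]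
    simp only [neg_ne_zero, mul_ne_zero_iff]
    refine ⟨pow_ne_zero _ ht, ?_⟩
    simp only [Cc, map_zpow₀]
    exact zpow_ne_zero _ hCξ
  exact hli
end
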